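/- Let G be an edge-labelled graph in which every Δ-module is trivial, and suppose G has at least one overlap edge or at least one non-edge (non-adjacent pair of distinct vertices). Then either G has exactly two Δ-implication classes A and A⁻¹ with A ≠ A⁻¹, or G has exactly one Δ-implication class A with A = A⁻¹. -/

import Mathlib

/-!
Graphs here are finite, undirected, without parallel edges, and have a loop at
every vertex.  We model them as symmetric reflexive relations.
-/

structure LoopGraph (V : Type) where
  Adj : V → V → Prop
  symm : ∀ u v, Adj u v → Adj v u
  refl : ∀ u, Adj u u

namespace LoopGraph

variable {V W : Type}

/-- Closed neighbourhood `N[u]`. -/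
def nbhd (G : LoopGraph V) (u : V) : Set V := {v | G.Adj u v}

/-- `u` is a universal vertex. -/
def Universal (G : LoopGraph V) (u : V) : Prop := ∀ v, G.Adj u v

/-- `u ≠ v` are true twins if `N[u] = N[v]`. -/
def TrueTwins (G : LoopGraph V) (u v : V) : Prop := u ≠ v ∧ G.nbhd u = G.nbhd v

/-- `uv` is an inclusion edge: it is an edge and `N[u] ⊆ N[v]` or `N[v] ⊆ N[u]`. -/
def InclusionEdge (G : LoopGraph V) (u v : V) : Prop :=
  G.Adj u v ∧ (G.nbhd u ⊆ G.nbhd v ∨ G.nbhd v ⊆ G.nbhd u)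

/-- `u` overlaps `v`: they are adjacent and their closed neighbourhoods are incomparable. -/
def Overlaps (G : LoopGraph V) (u v : V) : Prop :=
  G.Adj u v ∧ ¬ G.nbhd u ⊆ G.nbhd v ∧ ¬ G.nbhd v ⊆ G.nbhd u

/-- `{u,v}` is a spanning pair. -/
def SpanningPair (G : LoopGraph V) (u v : V) : Prop :=
  (∀ x, ¬ G.Adj v x → G.nbhd x ⊆ G.nbhd u) ∧
  (∀ y, ¬ G.Adj u y → G.nbhd y ⊆ G.nbhd v)

/-- `uv` is a 2-overlap edge: an overlap edge forming a spanning pair. -/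
def TwoOverlapEdge (G : LoopGraph V) (u v : V) : Prop :=
  G.Overlaps u v ∧ G.SpanningPair u v

/-- `uv` is a 1-overlap edge: an overlap edge not forming a spanning pair. -/
def OneOverlapEdge (G : LoopGraph V) (u v : V) : Prop :=
  G.Overlaps u v ∧ ¬ G.SpanningPair u v

/-- `{u,v}` is a circular pair: a non-adjacent spanning pair. -/
def CircularPair (G : LoopGraph V) (u v : V) : Prop :=
  G.SpanningPair u v ∧ ¬ G.Adj u v

/-- Every vertex belongs to some circular pair. -/
def CircularlyPaired (G : LoopGraph V) : Prop := ∀ u, ∃ v, G.CircularPair u v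

/-- A walk with `k` edges: vertices `P 0, …, P k` with consecutive vertices adjacent. -/
def IsWalk (G : LoopGraph V) (k : ℕ) (P : ℕ → V) : Prop :=
  ∀ i < k, G.Adj (P i) (P (i + 1))

/-- Vertex `z` avoids the edge `ab`: every neighbour of `z` among `a, b` overlaps `z`,
and if `z` overlaps both `a` and `b` then `a, b` do not overlap each other. -/
def AvoidsEdge (G : LoopGraph V) (z a b : V) : Prop :=
  (G.Adj z a → G.Overlaps z a) ∧ (G.Adj z b → G.Overlaps z b) ∧
  (G.Overlaps z a → G.Overlaps z b → ¬ G.Overlaps a b)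

/-- Vertex `z` and the walk `P` (with `k` edges) avoid each other. -/
def AvoidsWalk (G : LoopGraph V) (z : V) (k : ℕ) (P : ℕ → V) : Prop :=
  (∀ i ≤ k, G.Adj z (P i) → G.Overlaps z (P i)) ∧
  (∀ i < k, G.Overlaps z (P i) → G.Overlaps z (P (i + 1)) →
    ¬ G.Overlaps (P i) (P (i + 1)))

/-- The walks `P` and `Q` (both with `k` edges) avoid each other. -/
def WalksAvoid (G : LoopGraph V) (k : ℕ) (P Q : ℕ → V) : Prop :=
  ∀ i < k, G.AvoidsEdge (P i) (Q i) (Q (i + 1)) ∧ G.AvoidsEdge (Q (i + 1)) (P i) (P (i + 1))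

/-- `{x,y}` is a `z`-invertible pair, i.e. an invertible pair anchored at `z`. -/
def ZInvertiblePair (G : LoopGraph V) (z x y : V) : Prop :=
  x ≠ y ∧ x ≠ z ∧ y ≠ z ∧
  ∃ k, ∃ P Q : ℕ → V, G.IsWalk k P ∧ G.IsWalk k Q ∧
    P 0 = x ∧ P k = y ∧ Q 0 = y ∧ Q k = x ∧
    G.WalksAvoid k P Q ∧ G.AvoidsWalk z k P ∧ G.AvoidsWalk z k Q

/-- `G` contains an anchored invertible pair. -/
def HasAnchoredInvertiblePair (G : LoopGraph V) : Prop :=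
  ∃ z x y, G.ZInvertiblePair z x y

end LoopGraph

/-!
Circular arcs: the circle is modelled as the half-open interval `[0,1)`;
an arc is described by its left and right endpoints (clockwise = increasing),
wrapping around if necessary.
-/

/-- Membership of the point `t` in the clockwise arc from `l` to `r`. -/
def arcMem (l r t : ℝ) : Prop :=
  (l ≤ r ∧ l ≤ t ∧ t ≤ r) ∨ (r < l ∧ (l ≤ t ∨ t ≤ r))

/-- The arc `[l₁,r₁]` is contained in the arc `[l₂,r₂]`. -/
def arcSubset (l₁ r₁ l₂ r₂ : ℝ) : Prop :=
  ∀ t ∈ Set.Ico (0 : ℝ) 1, arcMem l₁ r₁ t → arcMem l₂ r₂ t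

/-- The arc `[lu,ru]` properly contains the arc `[lv,rv]`. -/
def arcProperContains (lu ru lv rv : ℝ) : Prop :=
  arcSubset lv rv lu ru ∧ ¬ arcSubset lu ru lv rv

/-- The arcs `[lu,ru]` and `[lv,rv]` together cover the whole circle. -/
def arcsCover (lu ru lv rv : ℝ) : Prop :=
  ∀ t ∈ Set.Ico (0 : ℝ) 1, arcMem lu ru t ∨ arcMem lv rv t

/-- `b` lies strictly between `a` and `c` in the clockwise cyclic order on `[0,1)`. -/
def cycBtw (a b c : ℝ) : Prop :=
  (a < b ∧ b < c) ∨ (b < c ∧ c < a) ∨ (c < a ∧ a < b)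

/-- The four points `a, b, c, d` of `[0,1)` occur in this clockwise cyclic order. -/
def cyc4 (a b c d : ℝ) : Prop := cycBtw a b c ∧ cycBtw a c d

namespace LoopGraph

variable {V W : Type}

/-- `(l, r)` is a circular-arc representation of `G`: all endpoints are distinct and
two vertices are adjacent iff their arcs intersect. -/
def IsCARep (G : LoopGraph V) (l r : V → ℝ) : Prop :=
  (∀ v, l v ∈ Set.Ico (0 : ℝ) 1) ∧ (∀ v, r v ∈ Set.Ico (0 : ℝ) 1) ∧
  Function.Injective (Sum.elim l r) ∧
  ∀ u v, (G.Adj u v ↔ ∃ t ∈ Set.Ico (0 : ℝ) 1,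
    arcMem (l u) (r u) t ∧ arcMem (l v) (r v) t)

/-- `G` is a circular-arc graph. -/
def IsCircularArc (G : LoopGraph V) : Prop := ∃ l r : V → ℝ, G.IsCARep l r

/-- A normalized circular-arc representation of `G`. -/
def IsNormalizedRep (G : LoopGraph V) (l r : V → ℝ) : Prop :=
  G.IsCARep l r ∧
  ∀ u v, G.Adj u v → u ≠ v →
    (arcProperContains (l u) (r u) (l v) (r v) ↔ G.nbhd v ⊆ G.nbhd u) ∧
    (arcsCover (l u) (r u) (l v) (r v) ↔ G.TwoOverlapEdge u v)

/-- A circular-arc representation of the induced subgraph `G[X]` which is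
normalized with respect to `G`. -/
def IsNormalizedRepOn (G : LoopGraph V) (X : Set V) (l r : V → ℝ) : Prop :=
  (∀ v ∈ X, l v ∈ Set.Ico (0 : ℝ) 1) ∧ (∀ v ∈ X, r v ∈ Set.Ico (0 : ℝ) 1) ∧
  Set.InjOn l X ∧ Set.InjOn r X ∧ (∀ u ∈ X, ∀ v ∈ X, l u ≠ r v) ∧
  (∀ u ∈ X, ∀ v ∈ X,
    (G.Adj u v ↔ ∃ t ∈ Set.Ico (0 : ℝ) 1,
      arcMem (l u) (r u) t ∧ arcMem (l v) (r v) t)) ∧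
  (∀ u ∈ X, ∀ v ∈ X, G.Adj u v → u ≠ v →
    (arcProperContains (l u) (r u) (l v) (r v) ↔ G.nbhd v ⊆ G.nbhd u) ∧
    (arcsCover (l u) (r u) (l v) (r v) ↔ G.TwoOverlapEdge u v))

/-! Circular completions. -/

/-- `f` exhibits `G` as an induced subgraph of `H`. -/
def InducedEmb (G : LoopGraph V) (H : LoopGraph W) (f : V → W) : Prop :=
  Function.Injective f ∧ ∀ u v, (G.Adj u v ↔ H.Adj (f u) (f v))

/-- Every edge of `G` has the same type (inclusion / 1-overlap / 2-overlap)
in `G` and in `H`. -/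
def SameEdgeTypes (G : LoopGraph V) (H : LoopGraph W) (f : V → W) : Prop :=
  ∀ u v, G.Adj u v →
    ((G.InclusionEdge u v ↔ H.InclusionEdge (f u) (f v)) ∧
     (G.OneOverlapEdge u v ↔ H.OneOverlapEdge (f u) (f v)) ∧
     (G.TwoOverlapEdge u v ↔ H.TwoOverlapEdge (f u) (f v)))

/-- `H` (with embedding `f`) is a circular completion of `G`: a circularly-paired
graph with the fewest possible vertices containing `G` as an induced subgraph with
all edge types preserved. -/
def IsCircularCompletion (G : LoopGraph V) (H : LoopGraph W) (f : V → W) : Prop :=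
  Finite W ∧ G.InducedEmb H f ∧ G.SameEdgeTypes H f ∧ H.CircularlyPaired ∧
  ∀ (W' : Type) (H' : LoopGraph W') (f' : V → W'), Finite W' →
    G.InducedEmb H' f' → G.SameEdgeTypes H' f' → H'.CircularlyPaired →
    Nat.card W ≤ Nat.card W'

/-! The anchored Δ-knotting graph. -/

/-- `A(z)`: vertices nonadjacent to `z` or overlapping `z`. -/
def Aset (G : LoopGraph V) (z : V) : Set V := {u | ¬ G.Adj z u ∨ G.Overlaps z u}

/-- `x` and `y` are `uz`-connected. -/
def UZConnected (G : LoopGraph V) (u z x y : V) : Prop :=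
  ¬ G.InclusionEdge x u ∧ ¬ G.InclusionEdge y u ∧ ¬ G.InclusionEdge x z ∧
  ¬ G.InclusionEdge y z ∧ ¬ G.InclusionEdge u z ∧
  ∃ k, ∃ P : ℕ → V, G.IsWalk k P ∧ P 0 = x ∧ P k = y ∧
    G.AvoidsWalk u k P ∧ G.AvoidsWalk z k P

/-- `X` is a `uz`-component: a maximal set of pairwise `uz`-connected vertices. -/
def IsUZComponent (G : LoopGraph V) (u z : V) (X : Set V) : Prop :=
  X.Nonempty ∧ (∀ x ∈ X, ∀ y ∈ X, G.UZConnected u z x y) ∧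
  ∀ Y : Set V, X ⊆ Y → (∀ x ∈ Y, ∀ y ∈ Y, G.UZConnected u z x y) → Y = X

/-- Vertices of the `z`-anchored Δ-knotting graph: copies `(u, X)` of `u ∈ A(z)`,
one for each `uz`-component `X`. -/
def KnotVertex (G : LoopGraph V) (z : V) (p : V × Set V) : Prop :=
  p.1 ∈ G.Aset z ∧ G.IsUZComponent p.1 z p.2

/-- Edges of the `z`-anchored Δ-knotting graph: for each edge `uv` of `G` with
`u, v ∈ A(z)`, an edge between the copy of `u` for `X` and the copy of `v` for `Y`
whenever `v ∈ X` and `u ∈ Y`. -/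
def KnotAdj (G : LoopGraph V) (z : V) (p q : V × Set V) : Prop :=
  G.Adj p.1 q.1 ∧ p.1 ∈ G.Aset z ∧ q.1 ∈ G.Aset z ∧ q.1 ∈ p.2 ∧ p.1 ∈ q.2

/-- The `z`-anchored Δ-knotting graph of `G` is bipartite (it is 2-colourable). -/
def KnotBipartite (G : LoopGraph V) (z : V) : Prop :=
  ∃ c : V × Set V → Bool, ∀ p q, G.KnotVertex z p → G.KnotVertex z q →
    G.KnotAdj z p q → c p ≠ c q

/-! Non-inverting sets. -/

/-- `X` is a non-inverting set of `G`. -/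
def NonInvertingSet (G : LoopGraph V) (X : Set V) : Prop :=
  (∀ u ∈ X, ∀ v ∈ X, ¬ G.TwoOverlapEdge u v) ∧
  ¬ ∃ x ∈ X, ∃ y ∈ X, ∃ k, 0 < k ∧ ∃ P Q : ℕ → V,
      G.IsWalk k P ∧ G.IsWalk k Q ∧ (∀ i ≤ k, P i ∈ X) ∧ (∀ i ≤ k, Q i ∈ X) ∧
      P 0 = x ∧ P k = y ∧ Q 0 = y ∧ Q k = x ∧ G.WalksAvoid k P Q

end LoopGraph

/-!
Edge-labelled graphs: graphs (with loops) in which every edge is labelled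
inclusion or overlap, loops being labelled inclusion.
-/

structure ELGraph (V : Type) where
  Adj : V → V → Prop
  symm : ∀ u v, Adj u v → Adj v u
  refl : ∀ u, Adj u u
  /-- `Ovl u v` means the edge `uv` is labelled as an overlap edge. -/
  Ovl : V → V → Prop
  ovl_symm : ∀ u v, Ovl u v → Ovl v u
  ovl_adj : ∀ u v, Ovl u v → Adj u v
  ovl_irrefl : ∀ u, ¬ Ovl u u

namespace ELGraph

variable {V : Type}

/-- Closed neighbourhood `N[u]`. -/
def nbhd (G : ELGraph V) (u : V) : Set V := {v | G.Adj u v}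

/-- `uv` is (labelled as) an inclusion edge. -/
def InclEdge (G : ELGraph V) (u v : V) : Prop := G.Adj u v ∧ ¬ G.Ovl u v

/-- A walk with `k` edges. -/
def IsWalk (G : ELGraph V) (k : ℕ) (P : ℕ → V) : Prop :=
  ∀ i < k, G.Adj (P i) (P (i + 1))

/-- `z` avoids the edge `ab`: every neighbour of `z` among `a, b` overlaps `z`, and if
`z` overlaps both `a` and `b` then the edge `ab` is an inclusion edge. -/
def AvoidsEdge (G : ELGraph V) (z a b : V) : Prop :=
  (G.Adj z a → G.Ovl z a) ∧ (G.Adj z b → G.Ovl z b) ∧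
  (G.Ovl z a → G.Ovl z b → ¬ G.Ovl a b)

/-- The walks `P` and `Q` (both with `k` edges) avoid each other. -/
def WalksAvoid (G : ELGraph V) (k : ℕ) (P Q : ℕ → V) : Prop :=
  ∀ i < k, G.AvoidsEdge (P i) (Q i) (Q (i + 1)) ∧ G.AvoidsEdge (Q (i + 1)) (P i) (P (i + 1))

/-- The ordered pair `p` is related to the ordered pair `q`: there exist a walk from
`p.1` to `q.1` and a walk from `p.2` to `q.2`, of the same (positive) length, that
avoid each other. -/
def Related (G : ELGraph V) (p q : V × V) : Prop :=
  ∃ k, 0 < k ∧ ∃ P Q : ℕ → V, G.IsWalk k P ∧ G.IsWalk k Q ∧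
    P 0 = p.1 ∧ Q 0 = p.2 ∧ P k = q.1 ∧ Q k = q.2 ∧ G.WalksAvoid k P Q

/-- A Δ-implication class: a maximal set of pairwise related ordered pairs. -/
def IsDeltaClass (G : ELGraph V) (A : Set (V × V)) : Prop :=
  A.Nonempty ∧ (∀ p ∈ A, ∀ q ∈ A, G.Related p q) ∧
  ∀ B : Set (V × V), A ⊆ B → (∀ p ∈ B, ∀ q ∈ B, G.Related p q) → B = A

/-- `A⁻¹ = {(u,v) : (v,u) ∈ A}`. -/
def inv (A : Set (V × V)) : Set (V × V) := {p | p.swap ∈ A}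

/-- `span A`: the set of vertices incident to pairs of `A`. -/
def span (A : Set (V × V)) : Set V := {v | ∃ p ∈ A, v = p.1 ∨ v = p.2}

/-- `S` induces a clique. -/
def IsClique (G : ELGraph V) (S : Set V) : Prop := ∀ a ∈ S, ∀ b ∈ S, G.Adj a b

/-- A Δ-module. -/
def IsDeltaModule (G : ELGraph V) (S : Set V) : Prop :=
  S.Nonempty ∧
  (∀ x, x ∉ S →
    ((∀ s ∈ S, ¬ G.Adj x s) ∨ (∀ s ∈ S, G.InclEdge x s) ∨ (∀ s ∈ S, G.Ovl x s))) ∧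
  (¬ G.IsClique S → ∀ x, x ∉ S → ∀ s ∈ S, ¬ G.Ovl x s)

/-- A trivial Δ-module: the whole vertex set or a single vertex. -/
def TrivialModule (S : Set V) : Prop := S = Set.univ ∨ ∃ a : V, S = {a}

/-- `{a,b}` is a Δ-invertible pair: `(a,b)` is related to `(b,a)`. -/
def DeltaInvertiblePair (G : ELGraph V) (a b : V) : Prop := G.Related (a, b) (b, a)

/-- An interval ordering of an edge-labelled graph. -/
def IsIntervalOrdering (G : ELGraph V) (lt : V → V → Prop) : Prop :=
  IsStrictTotalOrder V lt ∧
  ¬ ∃ a b c, lt a b ∧ lt b c ∧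
    ((¬ G.Adj a b ∧ G.Adj a c) ∨
     (G.InclEdge a b ∧ ¬ G.Adj a c ∧ G.Adj b c) ∨
     (G.Ovl a b ∧ G.Adj a c ∧ ¬ G.Adj b c) ∨
     (G.Ovl a b ∧ G.Ovl b c ∧ G.InclEdge a c) ∨
     (G.InclEdge a b ∧ G.InclEdge b c ∧ G.Ovl a c))

/-- An interval representation of `G` consistent with its labelling. -/
def IsConsistentIntervalRep (G : ELGraph V) (l r : V → ℝ) : Prop :=
  (∀ v, l v ≤ r v) ∧
  (∀ u v, (G.Adj u v ↔ (Set.Icc (l u) (r u) ∩ Set.Icc (l v) (r v)).Nonempty)) ∧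
  (∀ u v, (G.Ovl u v ↔
    ((Set.Icc (l u) (r u) ∩ Set.Icc (l v) (r v)).Nonempty ∧
     ¬ Set.Icc (l u) (r u) ⊆ Set.Icc (l v) (r v) ∧
     ¬ Set.Icc (l v) (r v) ⊆ Set.Icc (l u) (r u))))

/-- A consistently edge-labelled graph: there is a transitive orientation `D` of its
inclusion edges (between distinct vertices) such that `D u v → N[v] ⊆ N[u]`. -/
def ConsistentlyLabelled (G : ELGraph V) : Prop :=
  ∃ D : V → V → Prop,
    (∀ u v, D u v → u ≠ v ∧ G.InclEdge u v) ∧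
    (∀ u v, u ≠ v → G.InclEdge u v → (D u v ↔ ¬ D v u)) ∧
    (∀ u v w, D u v → D v w → D u w) ∧
    (∀ u v, D u v → G.nbhd v ⊆ G.nbhd u)

end ELGraph


namespace DeltaProof

variable {V : Type} (G : ELGraph V)

/-- `(a,b)` is a *good* pair (in content): if adjacent then overlapping. -/
def Gd (a b : V) : Prop := G.Adj a b → G.Ovl a b

/-- triple overlap -/
def Trip (z a b : V) : Prop := G.Ovl z a ∧ G.Ovl z b ∧ G.Ovl a b

/-- elementary move on ordered pairs -/
def Stp (p q : V × V) : Prop :=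
  (p.1 = q.1 ∧ Gd G p.1 p.2 ∧ Gd G q.1 q.2 ∧ G.Adj p.2 q.2 ∧ ¬ Trip G p.1 p.2 q.2) ∨
  (p.2 = q.2 ∧ Gd G p.1 p.2 ∧ Gd G q.1 q.2 ∧ G.Adj p.1 q.1 ∧ ¬ Trip G p.2 p.1 q.1)

def Rch : (V × V) → (V × V) → Prop := Relation.ReflTransGen (Stp G)

variable {G}

lemma gd_ne {a b : V} (h : Gd G a b) : a ≠ b := by
  rintro rfl; exact G.ovl_irrefl a (h (G.refl a))

lemma gd_symm {a b : V} (h : Gd G a b) : Gd G b a :=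
  fun hab => G.ovl_symm _ _ (h (G.symm _ _ hab))

lemma trip_symm23 {z a b : V} (h : Trip G z a b) : Trip G z b a :=
  ⟨h.2.1, h.1, G.ovl_symm _ _ h.2.2⟩

lemma stp_symm : Symmetric (Stp G) := by
  rintro p q (⟨h1, h2, h3, h4, h5⟩ | ⟨h1, h2, h3, h4, h5⟩)
  · exact Or.inl ⟨h1.symm, h3, h2, G.symm _ _ h4, fun ht => h5 (h1 ▸ trip_symm23 ht)⟩
  · exact Or.inr ⟨h1.symm, h3, h2, G.symm _ _ h4, fun ht => h5 (h1 ▸ trip_symm23 ht)⟩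

lemma stp_gd_right {p q : V × V} (h : Stp G p q) : Gd G q.1 q.2 := by
  rcases h with ⟨_, _, h, _⟩ | ⟨_, _, h, _⟩ <;> exact h

lemma stp_gd_left {p q : V × V} (h : Stp G p q) : Gd G p.1 p.2 :=
  stp_gd_right (stp_symm h)

lemma rch_symm : Symmetric (Rch G) := fun a b h => by
  haveI : Std.Symm (Stp G) := ⟨fun x y hxy => stp_symm hxy⟩
  exact Relation.ReflTransGen.stdSymm.symm a b h

lemma rch_trans {p q r : V × V} (h1 : Rch G p q) (h2 : Rch G q r) : Rch G p r :=
  Relation.ReflTransGen.trans h1 h2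

lemma rch_gd {p q : V × V} (hp : Gd G p.1 p.2) (h : Rch G p q) : Gd G q.1 q.2 := by
  induction h with
  | refl => exact hp
  | tail _ hs _ => exact stp_gd_right hs

lemma stp_swap {p q : V × V} (h : Stp G p q) : Stp G p.swap q.swap := by
  rcases h with ⟨h1, h2, h3, h4, h5⟩ | ⟨h1, h2, h3, h4, h5⟩
  · exact Or.inr ⟨h1, gd_symm h2, gd_symm h3, h4, h5⟩
  · exact Or.inl ⟨h1, gd_symm h2, gd_symm h3, h4, h5⟩

lemma rch_swap {p q : V × V} (h : Rch G p q) : Rch G p.swap q.swap := by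
  induction h with
  | refl => exact Relation.ReflTransGen.refl
  | tail _ hs ih => exact ih.tail (stp_swap hs)

end DeltaProof
namespace DeltaProof
variable {V : Type} {G : ELGraph V}

lemma related_gd {p q : V × V} (h : G.Related p q) : Gd G p.1 p.2 ∧ Gd G q.1 q.2 := by
  obtain ⟨k, hk, P, Q, hP, hQ, hP0, hQ0, hPk, hQk, hA⟩ := h
  constructor
  · have := (hA 0 hk).1.1
    rw [hP0, hQ0] at this; exact this
  · have h2 := (hA (k - 1) (by omega)).2
    have hk1 : k - 1 + 1 = k := by omega
    rw [hk1, hPk, hQk] at h2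
    intro hadj
    exact G.ovl_symm _ _ (h2.2.1 (G.symm _ _ hadj))

lemma related_refl {p : V × V} (h : Gd G p.1 p.2) : G.Related p p := by
  refine ⟨1, one_pos, (fun _ => p.1), (fun _ => p.2), fun i _ => G.refl _, fun i _ => G.refl _,
    rfl, rfl, rfl, rfl, fun i _ => ⟨⟨h, h, fun _ _ => G.ovl_irrefl _⟩,
      ⟨gd_symm h, gd_symm h, fun _ _ => G.ovl_irrefl _⟩⟩⟩

lemma related_of_stp {p q : V × V} (h : Stp G p q) : G.Related p q := by
  rcases h with ⟨h1, h2, h3, h4, h5⟩ | ⟨h1, h2, h3, h4, h5⟩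
  · -- second coordinate moves: P const, Q : p.2 then q.2
    have h3' : Gd G p.1 q.2 := by rw [h1]; exact h3
    refine ⟨1, one_pos, (fun _ => p.1), (fun i => if i = 0 then p.2 else q.2),
      fun i _ => G.refl _, ?_, rfl, rfl, h1, rfl, ?_⟩
    · intro i hi; interval_cases i
      show G.Adj p.2 q.2; exact h4
    · intro i hi; interval_cases i
      show G.AvoidsEdge p.1 p.2 q.2 ∧ G.AvoidsEdge q.2 p.1 p.1
      refine ⟨⟨h2, h3', fun ho1 ho2 ht => h5 ⟨ho1, ho2, ht⟩⟩,
        ⟨gd_symm h3', gd_symm h3', fun _ _ => G.ovl_irrefl _⟩⟩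
  · -- first coordinate moves
    have h3' : Gd G q.1 p.2 := by rw [h1]; exact h3
    refine ⟨1, one_pos, (fun i => if i = 0 then p.1 else q.1), (fun _ => p.2),
      ?_, fun i _ => G.refl _, rfl, rfl, rfl, h1, ?_⟩
    · intro i hi; interval_cases i
      show G.Adj p.1 q.1; exact h4
    · intro i hi; interval_cases i
      show G.AvoidsEdge p.1 p.2 p.2 ∧ G.AvoidsEdge p.2 p.1 q.1
      refine ⟨⟨h2, h2, fun _ _ => G.ovl_irrefl _⟩,
        ⟨gd_symm h2, gd_symm h3', fun ho1 ho2 ht => h5 ⟨ho1, ho2, ht⟩⟩⟩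

lemma related_trans {p q r : V × V} (h1 : G.Related p q) (h2 : G.Related q r) :
    G.Related p r := by
  obtain ⟨k1, hk1, P1, Q1, hP1, hQ1, hP10, hQ10, hP1k, hQ1k, hA1⟩ := h1
  obtain ⟨k2, hk2, P2, Q2, hP2, hQ2, hP20, hQ20, hP2k, hQ2k, hA2⟩ := h2
  set Pc : ℕ → V := fun i => if i < k1 then P1 i else P2 (i - k1) with hPc
  set Qc : ℕ → V := fun i => if i < k1 then Q1 i else Q2 (i - k1) with hQc
  have Pe1 : ∀ i, i < k1 → Pc i = P1 i := by intro i h; simp [hPc, h]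
  have Pe2 : ∀ i, ¬ i < k1 → Pc i = P2 (i - k1) := by intro i h; simp [hPc, h]
  have Qe1 : ∀ i, i < k1 → Qc i = Q1 i := by intro i h; simp [hQc, h]
  have Qe2 : ∀ i, ¬ i < k1 → Qc i = Q2 (i - k1) := by intro i h; simp [hQc, h]
  have Pk : Pc k1 = P1 k1 := by
    rw [Pe2 k1 (lt_irrefl k1), Nat.sub_self, hP20, hP1k]
  have Qk : Qc k1 = Q1 k1 := by
    rw [Qe2 k1 (lt_irrefl k1), Nat.sub_self, hQ20, hQ1k]
  have hsub : ∀ i, ¬ i < k1 → i + 1 - k1 = (i - k1) + 1 := by intro i h; omega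
  refine ⟨k1 + k2, by omega, Pc, Qc, ?_, ?_, ?_, ?_, ?_, ?_, ?_⟩
  case refine_3 => rw [Pe1 0 hk1]; exact hP10
  case refine_4 => rw [Qe1 0 hk1]; exact hQ10
  case refine_5 => rw [Pe2 _ (by omega), show k1 + k2 - k1 = k2 by omega]; exact hP2k
  case refine_6 => rw [Qe2 _ (by omega), show k1 + k2 - k1 = k2 by omega]; exact hQ2k
  case refine_1 =>
    intro i hi
    by_cases h : i < k1
    · rw [Pe1 i h]
      by_cases h' : i + 1 < k1
      · rw [Pe1 _ h']; exact hP1 i h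
      · rw [show i + 1 = k1 by omega, Pk, show k1 = i + 1 by omega]; exact hP1 i h
    · rw [Pe2 i h, Pe2 (i+1) (by omega), hsub i h]
      exact hP2 (i - k1) (by omega)
  case refine_2 =>
    intro i hi
    by_cases h : i < k1
    · rw [Qe1 i h]
      by_cases h' : i + 1 < k1
      · rw [Qe1 _ h']; exact hQ1 i h
      · rw [show i + 1 = k1 by omega, Qk, show k1 = i + 1 by omega]; exact hQ1 i h
    · rw [Qe2 i h, Qe2 (i+1) (by omega), hsub i h]
      exact hQ2 (i - k1) (by omega)
  case refine_7 =>
    intro i hi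
    by_cases h : i < k1
    · rw [Pe1 i h, Qe1 i h]
      by_cases h' : i + 1 < k1
      · rw [Pe1 _ h', Qe1 _ h']; exact hA1 i h
      · rw [show i + 1 = k1 by omega, Pk, Qk, show k1 = i + 1 by omega]; exact hA1 i h
    · rw [Pe2 i h, Pe2 (i+1) (by omega), Qe2 i h, Qe2 (i+1) (by omega), hsub i h]
      exact hA2 (i - k1) (by omega)

lemma rch_of_related {p q : V × V} (h : G.Related p q) : Rch G p q := by
  obtain ⟨k, hk, P, Q, hP, hQ, hP0, hQ0, hPk, hQk, hA⟩ := h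
  have key : ∀ i ≤ k, Rch G (P 0, Q 0) (P i, Q i) := by
    intro i
    induction i with
    | zero => intro _; exact Relation.ReflTransGen.refl
    | succ n ih =>
      intro hn
      have hnk : n < k := by omega
      have a1 := (hA n hnk).1
      have a2 := (hA n hnk).2
      have s1 : Stp G (P n, Q n) (P n, Q (n+1)) :=
        Or.inl ⟨rfl, a1.1, a1.2.1, hQ n hnk, fun ht => a1.2.2 ht.1 ht.2.1 ht.2.2⟩
      have s2 : Stp G (P n, Q (n+1)) (P (n+1), Q (n+1)) := by
        refine Or.inr ⟨rfl, a1.2.1, ?_, hP n hnk, fun ht => a2.2.2 ht.1 ht.2.1 ht.2.2⟩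
        intro hadj
        exact G.ovl_symm _ _ (a2.2.1 (G.symm _ _ hadj))
      exact ((ih (by omega)).tail s1).tail s2
  have := key k le_rfl
  rw [hP0, hQ0, hPk, hQk] at this
  exact this

lemma related_of_rch {p q : V × V} (hp : Gd G p.1 p.2) (h : Rch G p q) : G.Related p q := by
  induction h with
  | refl => exact related_refl hp
  | tail hr hs ih => exact related_trans ih (related_of_stp hs)

end DeltaProof
namespace DeltaProof
variable {V : Type} {G : ELGraph V}

lemma isClass_comp {p : V × V} (hp : Gd G p.1 p.2) : G.IsDeltaClass {q | Rch G p q} := by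
  refine ⟨⟨p, Relation.ReflTransGen.refl⟩, ?_, ?_⟩
  · intro q hq r hr
    exact related_of_rch (rch_gd hp hq) (rch_trans (rch_symm hq) hr)
  · intro B hAB hB
    apply Set.Subset.antisymm _ hAB
    intro q hq
    exact rch_of_related (hB p (hAB Relation.ReflTransGen.refl) q hq)

lemma class_eq_comp {A : Set (V × V)} (hA : G.IsDeltaClass A) :
    ∃ p : V × V, Gd G p.1 p.2 ∧ A = {q | Rch G p q} := by
  obtain ⟨⟨p, hp⟩, hrel, hmax⟩ := hA
  have hgd : Gd G p.1 p.2 := (related_gd (hrel p hp p hp)).1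
  refine ⟨p, hgd, ?_⟩
  have hsub : A ⊆ {q | Rch G p q} := fun q hq => rch_of_related (hrel p hp q hq)
  exact (hmax {q | Rch G p q} hsub fun q hq r hr =>
    related_of_rch (rch_gd hgd hq) (rch_trans (rch_symm hq) hr)).symm

/-! ### The machinery for a fixed component -/

variable (G) in
/-- membership in the component of `p0` -/
def InC (p0 q : V × V) : Prop := Rch G p0 q

variable (G) in
/-- unordered membership in the orbit of the component of `p0` -/
def InO (p0 : V × V) (a b : V) : Prop := InC G p0 (a, b) ∨ InC G p0 (b, a)

variable (G) in
/-- the span of the component of `p0` -/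
def SpanC (p0 : V × V) : Set V := {x | ∃ q, InC G p0 q ∧ (x = q.1 ∨ x = q.2)}

variable {p0 : V × V} (h0 : Gd G p0.1 p0.2)
include h0

lemma inC_gd {q : V × V} (hq : InC G p0 q) : Gd G q.1 q.2 := rch_gd h0 hq

omit h0 in
lemma inO_symm {a b : V} (h : InO G p0 a b) : InO G p0 b a := h.symm

lemma inO_gd {a b : V} (h : InO G p0 a b) : Gd G a b := by
  rcases h with h | h
  · exact inC_gd h0 h
  · exact gd_symm (inC_gd h0 h)

omit h0 in
lemma inC_stp {q r : V × V} (hq : InC G p0 q) (hs : Stp G q r) : InC G p0 r :=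
  Relation.ReflTransGen.tail hq hs

omit h0 in
lemma mem_spanC_left {q : V × V} (hq : InC G p0 q) : q.1 ∈ SpanC G p0 := ⟨q, hq, Or.inl rfl⟩
omit h0 in
lemma mem_spanC_right {q : V × V} (hq : InC G p0 q) : q.2 ∈ SpanC G p0 := ⟨q, hq, Or.inr rfl⟩

omit h0 in
lemma inO_spanC_left {a b : V} (h : InO G p0 a b) : a ∈ SpanC G p0 := by
  rcases h with h | h
  · exact mem_spanC_left h
  · exact mem_spanC_right h

/-- key cross lemma: an orbit pair and a good non-orbit pair at a common centre -/
lemma crossF {c x y : V} (hcx : InO G p0 c x) (hgd : Gd G c y) (hnin : ¬ InO G p0 c y)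
    (hadj : G.Adj x y) : G.Ovl c x ∧ G.Ovl c y ∧ G.Ovl x y := by
  by_contra ht
  rcases hcx with hcx | hcx
  · exact hnin (Or.inl (inC_stp hcx (Or.inl ⟨rfl, inC_gd h0 hcx, hgd, hadj, ht⟩)))
  · refine hnin (Or.inr (inC_stp hcx (Or.inr ⟨rfl, inC_gd h0 hcx, gd_symm hgd, hadj, ?_⟩)))
    exact fun h => ht h
end DeltaProof
namespace DeltaProof
variable {V : Type} {G : ELGraph V} {p0 : V × V} (h0 : Gd G p0.1 p0.2)
include h0

/-- outside vertices relate uniformly to the two ends of a component pair -/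
lemma pairUnif {x : V} (hx : x ∉ SpanC G p0) {q : V × V} (hq : InC G p0 q) :
    (¬ G.Adj x q.1 ∧ ¬ G.Adj x q.2) ∨
    (G.Adj x q.1 ∧ ¬ G.Ovl x q.1 ∧ G.Adj x q.2 ∧ ¬ G.Ovl x q.2) ∨
    (G.Ovl x q.1 ∧ G.Ovl x q.2) := by
  obtain ⟨u, w⟩ := q
  simp only at *
  have hgd : Gd G u w := inC_gd h0 hq
  have A1 : G.Adj w x → Gd G u x → Trip G u w x := by
    intro h h'
    by_contra ht
    have hstp : Stp G (u, w) (u, x) := Or.inl ⟨rfl, hgd, h', h, ht⟩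
    exact hx (mem_spanC_right (inC_stp hq hstp))
  have A2 : G.Adj u x → Gd G x w → Trip G w u x := by
    intro h h'
    by_contra ht
    have hstp : Stp G (u, w) (x, w) := Or.inr ⟨rfl, hgd, h', h, ht⟩
    exact hx (mem_spanC_left (inC_stp hq hstp))
  by_cases hau : G.Adj x u <;> by_cases haw : G.Adj x w
  · -- both adjacent
    by_cases hou : G.Ovl x u
    · refine Or.inr (Or.inr ⟨hou, ?_⟩)
      by_contra how
      have := A1 (G.symm _ _ haw) (fun _ => G.ovl_symm _ _ hou)
      exact how (G.ovl_symm _ _ this.2.2)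
    · refine Or.inr (Or.inl ⟨hau, hou, haw, ?_⟩)
      intro how
      have := A2 (G.symm _ _ hau) (fun _ => how)
      exact hou (G.ovl_symm _ _ this.2.2)
  · -- adj u, not w
    exfalso
    have := A2 (G.symm _ _ hau) (fun h => absurd h haw)
    exact haw (G.ovl_symm _ _ this.2.1 |> G.ovl_adj _ _)
  · -- adj w, not u
    exfalso
    have := A1 (G.symm _ _ haw) (fun h => absurd (G.symm _ _ h) hau)
    exact hau (G.ovl_symm _ _ this.2.1 |> G.ovl_adj _ _)
  · exact Or.inl ⟨hau, haw⟩

lemma pairIff {x : V} (hx : x ∉ SpanC G p0) {q : V × V} (hq : InC G p0 q) :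
    (G.Adj x q.1 ↔ G.Adj x q.2) ∧ (G.Ovl x q.1 ↔ G.Ovl x q.2) := by
  rcases pairUnif h0 hx hq with ⟨h1, h2⟩ | ⟨h1, h2, h3, h4⟩ | ⟨h1, h2⟩
  · exact ⟨iff_of_false h1 h2,
      iff_of_false (fun h => h1 (G.ovl_adj _ _ h)) (fun h => h2 (G.ovl_adj _ _ h))⟩
  · exact ⟨iff_of_true h1 h3, iff_of_false h2 h4⟩
  · exact ⟨iff_of_true (G.ovl_adj _ _ h1) (G.ovl_adj _ _ h2), iff_of_true h1 h2⟩

lemma unifTy {x : V} (hx : x ∉ SpanC G p0) {s : V} (hs : s ∈ SpanC G p0) :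
    (G.Adj x s ↔ G.Adj x p0.1) ∧ (G.Ovl x s ↔ G.Ovl x p0.1) := by
  have key : ∀ q : V × V, InC G p0 q →
      (G.Adj x q.1 ↔ G.Adj x p0.1) ∧ (G.Ovl x q.1 ↔ G.Ovl x p0.1) := by
    intro q hq
    induction hq with
    | refl => exact ⟨Iff.rfl, Iff.rfl⟩
    | @tail b c hb hs ih =>
      have hbC : InC G p0 b := hb
      have hcC : InC G p0 c := inC_stp hbC hs
      rcases hs with ⟨h1, _⟩ | ⟨h1, _⟩
      · rw [← h1]; exact ih
      · have pb := pairIff h0 hx hbC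
        have pc := pairIff h0 hx hcC
        exact ⟨(pc.1.trans (h1 ▸ pb.1.symm)).trans ih.1,
          (pc.2.trans (h1 ▸ pb.2.symm)).trans ih.2⟩
  obtain ⟨q, hq, hs1 | hs2⟩ := hs
  · rw [hs1]; exact key q hq
  · rw [hs2]
    have p := pairIff h0 hx hq
    exact ⟨p.1.symm.trans (key q hq).1, p.2.symm.trans (key q hq).2⟩

lemma spanC_module : G.IsDeltaModule (SpanC G p0) := by
  refine ⟨⟨p0.1, p0, Relation.ReflTransGen.refl, Or.inl rfl⟩, ?_, ?_⟩
  · -- uniformity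
    intro x hx
    rcases pairUnif h0 hx (Relation.ReflTransGen.refl : InC G p0 p0) with
      ⟨h1, _⟩ | ⟨h1, h2, _, _⟩ | ⟨h1, _⟩
    · exact Or.inl fun s hs h => h1 ((unifTy h0 hx hs).1.mp h)
    · refine Or.inr (Or.inl fun s hs => ⟨(unifTy h0 hx hs).1.mpr h1,
        fun h => h2 ((unifTy h0 hx hs).2.mp h)⟩)
    · exact Or.inr (Or.inr fun s hs => (unifTy h0 hx hs).2.mpr h1)
  · -- overlap condition
    intro hnc x hx s hs hovl
    have hall : ∀ t ∈ SpanC G p0, G.Ovl x t := by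
      intro t ht
      exact (unifTy h0 hx ht).2.mpr ((unifTy h0 hx hs).2.mp hovl)
    by_cases hne : ∃ q, InC G p0 q ∧ ¬ G.Adj q.1 q.2
    · obtain ⟨q, hq, hqn⟩ := hne
      have hstp : Stp G q (q.1, x) := Or.inl ⟨rfl, inC_gd h0 hq,
        (fun _ => G.ovl_symm _ _ (hall q.1 (mem_spanC_left hq))),
        G.symm _ _ (G.ovl_adj _ _ (hall q.2 (mem_spanC_right hq))),
        fun ht => hqn (G.ovl_adj _ _ ht.1)⟩
      exact hx (mem_spanC_right (inC_stp hq hstp))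
    · push_neg at hne
      -- all component pairs are (overlap) edges; then the span is a clique
      apply hnc
      have claim1 : ∀ q, InC G p0 q → ∀ y, G.Adj q.2 y → G.Adj q.1 y := by
        intro q hq y h
        by_contra hn
        have hstp : Stp G q (q.1, y) := Or.inl ⟨rfl, inC_gd h0 hq,
          (fun h' => absurd h' hn), h, fun ht => hn (G.ovl_adj _ _ ht.2.1)⟩
        exact hn (hne _ (inC_stp hq hstp))
      have claim2 : ∀ q, InC G p0 q → ∀ y, G.Adj q.1 y → G.Adj q.2 y := by
        intro q hq y h
        by_contra hn
        have hstp : Stp G q (y, q.2) := Or.inr ⟨rfl, inC_gd h0 hq,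
          gd_symm (fun h' => absurd h' hn), h,
          fun ht => hn (G.ovl_adj _ _ ht.2.1)⟩
        exact hn (G.symm _ _ (hne _ (inC_stp hq hstp)))
      have nbr : ∀ q, InC G p0 q → ∀ y, G.Adj q.1 y ↔ G.Adj q.2 y :=
        fun q hq y => ⟨claim2 q hq y, claim1 q hq y⟩
      have Nu : ∀ q, InC G p0 q → ∀ y, G.Adj q.1 y ↔ G.Adj p0.1 y := by
        intro q hq
        induction hq with
        | refl => exact fun y => Iff.rfl
        | @tail b c hb hs ih =>
          have hbC : InC G p0 b := hb
          have hcC : InC G p0 c := inC_stp hbC hs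
          rcases hs with ⟨h1, _⟩ | ⟨h1, _⟩
          · rw [← h1]; exact ih
          · intro y
            exact ((nbr c hcC y).trans (h1 ▸ (nbr b hbC y).symm)).trans (ih y)
      have huniv : ∀ s ∈ SpanC G p0, ∀ y, G.Adj s y ↔ G.Adj p0.1 y := by
        intro s hs y
        obtain ⟨q, hq, h1 | h2⟩ := hs
        · rw [h1]; exact Nu q hq y
        · rw [h2]; exact ((nbr q hq y).symm).trans (Nu q hq y)
      intro a ha b hb
      have h1 : G.Adj b p0.1 := (huniv b hb p0.1).mpr (G.refl _)
      exact (huniv a ha b).mpr (G.symm _ _ h1)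

lemma spanV (hmod : ∀ S : Set V, G.IsDeltaModule S → ELGraph.TrivialModule S) (z : V) :
    z ∈ SpanC G p0 := by
  rcases hmod _ (spanC_module h0) with h | ⟨a, ha⟩
  · rw [h]; trivial
  · exfalso
    have h1 : p0.1 ∈ SpanC G p0 := ⟨p0, Relation.ReflTransGen.refl, Or.inl rfl⟩
    have h2 : p0.2 ∈ SpanC G p0 := ⟨p0, Relation.ReflTransGen.refl, Or.inr rfl⟩
    rw [ha] at h1 h2
    exact gd_ne h0 (h1.trans h2.symm)

lemma partner (hmod : ∀ S : Set V, G.IsDeltaModule S → ELGraph.TrivialModule S) (z : V) :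
    ∃ w, InO G p0 z w := by
  obtain ⟨q, hq, h1 | h2⟩ := spanV h0 hmod z
  · exact ⟨q.2, Or.inl (by rw [h1, Prod.mk.eta]; exact hq)⟩
  · exact ⟨q.1, Or.inr (by rw [h2, Prod.mk.eta]; exact hq)⟩

end DeltaProof
namespace DeltaProof
variable {V : Type} {G : ELGraph V}

variable (G) in
/-- edges of the auxiliary graph: good pairs outside the orbit of `p0` -/
def Ep (p0 : V × V) (a b : V) : Prop := Gd G a b ∧ ¬ InO G p0 a b

lemma ep_symm {p0 : V × V} {a b : V} (h : Ep G p0 a b) : Ep G p0 b a :=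
  ⟨gd_symm h.1, fun h' => h.2 (inO_symm h')⟩

variable {p0 : V × V} (h0 : Gd G p0.1 p0.2)
include h0

/-- propagation of the crux invariant along one move of the component -/
lemma stepProp {z u v v' : V} (h1 : InO G p0 u v) (h2 : InO G p0 u v')
    (hadj : G.Adj v v') (hnt : ¬ Trip G u v v')
    (ezu : Ep G p0 z u) (ezv : Ep G p0 z v) : Ep G p0 z v' := by
  obtain ⟨gzu, nzu⟩ := ezu
  obtain ⟨gzv, nzv⟩ := ezv
  have guz : Gd G u z := gd_symm gzu
  have nuz : ¬ InO G p0 u z := fun h => nzu (inO_symm h)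
  have gvz : Gd G v z := gd_symm gzv
  have nvz : ¬ InO G p0 v z := fun h => nzv (inO_symm h)
  -- dichotomy
  have hdi : (¬ G.Adj z u ∧ ¬ G.Adj z v) ∨ (G.Ovl z u ∧ G.Ovl z v ∧ G.Ovl u v) := by
    by_cases ha1 : G.Adj z u
    · have F2 := crossF h0 (inO_symm h1) gvz nvz (G.symm _ _ ha1)
      have ha2 : G.Adj v z := G.ovl_adj _ _ F2.2.1
      have F1 := crossF h0 h1 guz nuz ha2
      exact Or.inr ⟨G.ovl_symm _ _ F1.2.1, G.ovl_symm _ _ F2.2.1, F1.1⟩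
    · by_cases ha2 : G.Adj z v
      · have F1 := crossF h0 h1 guz nuz (G.symm _ _ ha2)
        exact absurd (G.symm _ _ (G.ovl_adj _ _ F1.2.1)) ha1
      · exact Or.inl ⟨ha1, ha2⟩
  have gzv' : Gd G z v' := by
    intro hadj'
    have F := crossF h0 h2 guz nuz (G.symm _ _ hadj')
    exact G.ovl_symm _ _ F.2.2
  refine ⟨gzv', fun hIn => ?_⟩
  have F := crossF h0 hIn gzv nzv (G.symm _ _ hadj)
  rcases hdi with ⟨_, ha2⟩ | ⟨ozu, ozv, ouv⟩
  · exact ha2 (G.ovl_adj _ _ F.2.1)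
  · have F2 := crossF h0 h2 guz nuz (G.symm _ _ (G.ovl_adj _ _ F.1))
    exact hnt ⟨ouv, F2.1, G.ovl_symm _ _ F.2.2⟩

lemma lemB_aux (hmod : ∀ S : Set V, G.IsDeltaModule S → ELGraph.TrivialModule S)
    {z a b : V} (hab : InC G p0 (a, b)) (eza : Ep G p0 z a) (ezb : Ep G p0 z b) : False := by
  have key : ∀ q : V × V, Rch G (a, b) q → Ep G p0 z q.1 ∧ Ep G p0 z q.2 := by
    intro q hq
    induction hq with
    | refl => exact ⟨eza, ezb⟩
    | @tail r c hr hs ih =>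
      have hrC : InC G p0 r := rch_trans hab hr
      have hcC : InC G p0 c := inC_stp hrC hs
      rcases hs with ⟨h1, _, _, hadj, hnt⟩ | ⟨h1, _, _, hadj, hnt⟩
      · have e1 : InO G p0 r.1 r.2 := Or.inl (by rw [Prod.mk.eta]; exact hrC)
        have e2 : InO G p0 r.1 c.2 := Or.inl (by rw [h1, Prod.mk.eta]; exact hcC)
        refine ⟨h1 ▸ ih.1, ?_⟩
        exact stepProp h0 (z := z) (u := r.1) (v := r.2) (v' := c.2) e1 e2
          hadj hnt (h1 ▸ ih.1) ih.2
      · have e1 : InO G p0 r.2 r.1 := Or.inr (by rw [Prod.mk.eta]; exact hrC)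
        have e2 : InO G p0 r.2 c.1 := Or.inr (by rw [h1, Prod.mk.eta]; exact hcC)
        refine ⟨?_, h1 ▸ ih.2⟩
        exact stepProp h0 (z := z) (u := r.2) (v := r.1) (v' := c.1) e1 e2
          hadj hnt (h1 ▸ ih.2) ih.1
  obtain ⟨q, hq, h1 | h2⟩ := spanV h0 hmod z
  · have := (key q (rch_trans (rch_symm hab) hq)).1
    rw [← h1] at this
    exact gd_ne this.1 rfl
  · have := (key q (rch_trans (rch_symm hab) hq)).2
    rw [← h2] at this
    exact gd_ne this.1 rfl

lemma lemB (hmod : ∀ S : Set V, G.IsDeltaModule S → ELGraph.TrivialModule S)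
    {z a b : V} (hab : InO G p0 a b) (eza : Ep G p0 z a) (ezb : Ep G p0 z b) : False := by
  rcases hab with h | h
  · exact lemB_aux h0 hmod h eza ezb
  · exact lemB_aux h0 hmod h ezb eza

lemma lemH (hmod : ∀ S : Set V, G.IsDeltaModule S → ELGraph.TrivialModule S)
    {a b : V} (hpath : Relation.ReflTransGen (Ep G p0) a b) (hab : InO G p0 a b) : False := by
  induction hpath using Relation.ReflTransGen.head_induction_on with
  | refl => exact gd_ne (inO_gd h0 hab) rfl
  | @head a c hep hrest ih =>
    by_cases h1 : InO G p0 c b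
    · exact ih h1
    · by_cases hcb : c = b
      · exact hep.2 (hcb ▸ hab)
      · by_cases h2 : Gd G c b
        · exact lemB h0 hmod hab (ep_symm hep) ⟨h2, h1⟩
        · have hncb : G.Adj c b ∧ ¬ G.Ovl c b := by
            by_contra hc
            exact h2 (fun hadj => by tauto)
          have F := crossF h0 hab hep.1 hep.2 (G.symm _ _ hncb.1)
          exact hncb.2 (G.ovl_symm _ _ F.2.2)

/-- the main structural result: every good pair lies in the orbit of `p0` -/
lemma mainInO (hmod : ∀ S : Set V, G.IsDeltaModule S → ELGraph.TrivialModule S)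
    (a b : V) (hgd : Gd G a b) : InO G p0 a b := by
  by_contra hno
  set T : Set V := {x | Relation.ReflTransGen (Ep G p0) a x} with hT
  have hsymmE : Symmetric (Ep G p0) := fun x y h => ep_symm h
  have hTa : a ∈ T := Relation.ReflTransGen.refl
  have hTb : b ∈ T := Relation.ReflTransGen.single ⟨hgd, hno⟩
  have hconn : ∀ u ∈ T, ∀ v ∈ T, Relation.ReflTransGen (Ep G p0) u v := by
    intro u hu v hv
    haveI : Std.Symm (Ep G p0) := ⟨fun x y hxy => hsymmE hxy⟩
    exact Relation.ReflTransGen.trans (Relation.ReflTransGen.stdSymm.symm _ _ hu) hv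
  have hnotEp : ∀ x, x ∉ T → ∀ u ∈ T, ¬ Ep G p0 x u := by
    intro x hx u hu he
    exact hx (Relation.ReflTransGen.trans hu (Relation.ReflTransGen.single (ep_symm he)))
  have hInO : ∀ x, x ∉ T → ∀ u ∈ T, Gd G x u → InO G p0 x u := by
    intro x hx u hu hg
    by_contra hn
    exact hnotEp x hx u hu ⟨hg, hn⟩
  -- one-way adjacency propagation along an `Ep`-edge
  have aI : ∀ x, x ∉ T → ∀ u ∈ T, ∀ v ∈ T, Ep G p0 u v → G.Adj x v → G.Adj x u := by
    intro x hx u hu v hv he h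
    by_contra hn
    have hgxu : Gd G x u := fun h' => absurd h' hn
    have hio : InO G p0 x u := hInO x hx u hu hgxu
    have F := crossF h0 (inO_symm hio) he.1 he.2 h
    exact hn (G.symm _ _ (G.ovl_adj _ _ F.1))
  have aII : ∀ x, x ∉ T → ∀ u ∈ T, ∀ v ∈ T, Ep G p0 u v → G.Ovl x u → G.Ovl x v := by
    intro x hx u hu v hv he hovl
    have hgxu : Gd G x u := fun _ => hovl
    have hio : InO G p0 x u := hInO x hx u hu hgxu
    have hadjv : G.Adj x v := by
      by_contra hn
      have hgxv : Gd G x v := fun h' => absurd h' hn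
      have hio' : InO G p0 x v := hInO x hx v hv hgxv
      have F := crossF h0 (inO_symm hio') (gd_symm he.1) (fun h => he.2 (inO_symm h))
        (G.ovl_adj _ _ hovl)
      exact hn (G.symm _ _ (G.ovl_adj _ _ F.1))
    have F := crossF h0 (inO_symm hio) he.1 he.2 hadjv
    exact F.2.2
  have tyE : ∀ x, x ∉ T → ∀ u ∈ T, (G.Adj x u ↔ G.Adj x a) ∧ (G.Ovl x u ↔ G.Ovl x a) := by
    intro x hx u hu
    induction hu with
    | refl => exact ⟨Iff.rfl, Iff.rfl⟩
    | @tail c d hc hcd ih =>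
      have hcT : c ∈ T := hc
      have hdT : d ∈ T := Relation.ReflTransGen.tail hc hcd
      constructor
      · constructor
        · intro h; exact ih.1.mp (aI x hx c hcT d hdT hcd h)
        · intro h; exact aI x hx d hdT c hcT (ep_symm hcd) (ih.1.mpr h)
      · constructor
        · intro h; exact ih.2.mp (aII x hx d hdT c hcT (ep_symm hcd) h)
        · intro h; exact aII x hx c hcT d hdT hcd (ih.2.mpr h)
  -- T is a Δ-module
  have hmodT : G.IsDeltaModule T := by
    refine ⟨⟨a, hTa⟩, ?_, ?_⟩
    · intro x hx
      by_cases h1 : G.Adj x a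
      · by_cases h2 : G.Ovl x a
        · exact Or.inr (Or.inr fun s hs => (tyE x hx s hs).2.mpr h2)
        · refine Or.inr (Or.inl fun s hs => ⟨(tyE x hx s hs).1.mpr h1,
            fun h => h2 ((tyE x hx s hs).2.mp h)⟩)
      · exact Or.inl fun s hs h => h1 ((tyE x hx s hs).1.mp h)
    · intro hnc x hx s hs hovl
      have hall : ∀ t ∈ T, G.Ovl x t := by
        intro t ht
        exact (tyE x hx t ht).2.mpr ((tyE x hx s hs).2.mp hovl)
      have hex : ∃ u ∈ T, ∃ v ∈ T, ¬ G.Adj u v := by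
        by_contra hc
        push_neg at hc
        exact hnc fun u hu v hv => hc u hu v hv
      obtain ⟨u', hu', v', hv', hnadj⟩ := hex
      have hgd' : Gd G u' v' := fun h => absurd h hnadj
      have hnio : ¬ InO G p0 u' v' := fun hI => lemH h0 hmod (hconn u' hu' v' hv') hI
      have hio : InO G p0 x u' := hInO x hx u' hu' (fun _ => hall u' hu')
      have F := crossF h0 (inO_symm hio) hgd' hnio (G.ovl_adj _ _ (hall v' hv'))
      exact hnadj (G.ovl_adj _ _ F.2.1)
  rcases hmod T hmodT with h | ⟨c, hc⟩
  · obtain ⟨w, hw⟩ := partner h0 hmod a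
    have hwT : w ∈ T := by rw [h]; trivial
    exact lemH h0 hmod (hconn a hTa w hwT) hw
  · have h1 : a ∈ ({c} : Set V) := hc ▸ hTa
    have h2 : b ∈ ({c} : Set V) := hc ▸ hTb
    exact gd_ne hgd (h1.trans h2.symm)

end DeltaProof
/-- If every Δ-module of `G` is trivial and `G` has an overlap edge or
a non-edge, then `G` has either exactly two Δ-implication classes `A ≠ A⁻¹`, or exactly
one Δ-implication class `A = A⁻¹`. -/
theorem deltaClasses_of_prime
    {V : Type} [Fintype V] (G : ELGraph V)
    (hmod : ∀ S : Set V, G.IsDeltaModule S → ELGraph.TrivialModule S)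
    (hne : (∃ u v, G.Ovl u v) ∨ (∃ u v : V, u ≠ v ∧ ¬ G.Adj u v)) :
    (∃ A, G.IsDeltaClass A ∧ ELGraph.inv A ≠ A ∧ G.IsDeltaClass (ELGraph.inv A) ∧
      ∀ B, G.IsDeltaClass B → B = A ∨ B = ELGraph.inv A) ∨
    (∃ A, G.IsDeltaClass A ∧ ELGraph.inv A = A ∧ ∀ B, G.IsDeltaClass B → B = A) := by
  classical
  open DeltaProof in
  have hex : ∃ p0 : V × V, Gd G p0.1 p0.2 := by
    rcases hne with ⟨u, v, h⟩ | ⟨u, v, _, hna⟩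
    · exact ⟨(u, v), fun _ => h⟩
    · exact ⟨(u, v), fun h => absurd h hna⟩
  obtain ⟨p0, h0⟩ := hex
  set A : Set (V × V) := {q | Rch G p0 q} with hA
  have hclassA : G.IsDeltaClass A := isClass_comp h0
  have hswap_mem : ∀ p q : V × V, Rch G p q.swap ↔ Rch G p.swap q := by
    intro p q
    constructor
    · intro h
      have := rch_swap h
      rwa [Prod.swap_swap] at this
    · intro h
      have := rch_swap h
      rwa [Prod.swap_swap] at this
  have hinv : ELGraph.inv A = {q | Rch G p0.swap q} := by
    ext q
    show Rch G p0 q.swap ↔ Rch G p0.swap q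
    exact hswap_mem p0 q
  have hswgd : Gd G p0.swap.1 p0.swap.2 := gd_symm h0
  have hall : ∀ B, G.IsDeltaClass B → B = A ∨ B = ELGraph.inv A := by
    intro B hB
    obtain ⟨p1, hp1, rfl⟩ := class_eq_comp hB
    rcases mainInO h0 hmod p1.1 p1.2 hp1 with h | h
    · left
      have h' : Rch G p0 p1 := by rwa [Prod.mk.eta] at h
      ext q
      exact ⟨fun hq => rch_trans h' hq, fun hq => rch_trans (rch_symm h') hq⟩
    · right
      have h' : Rch G p0 p1.swap := h
      have h'' : Rch G p0.swap p1 := (hswap_mem p0 p1).mp h'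
      rw [hinv]
      ext q
      exact ⟨fun hq => rch_trans h'' hq, fun hq => rch_trans (rch_symm h'') hq⟩
  by_cases hself : Rch G p0 p0.swap
  · right
    have hAA : ELGraph.inv A = A := by
      rw [hinv]
      have h' : Rch G p0.swap p0 := rch_symm hself
      ext q
      exact ⟨fun hq => rch_trans hself hq, fun hq => rch_trans h' hq⟩
    refine ⟨A, hclassA, hAA, fun B hB => ?_⟩
    rcases hall B hB with h | h
    · exact h
    · exact h.trans hAA
  · left
    refine ⟨A, hclassA, ?_, ?_, hall⟩
    · intro he
      have hm : p0.swap ∈ ELGraph.inv A := by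
        show Rch G p0 p0.swap.swap
        rw [Prod.swap_swap]
        exact Relation.ReflTransGen.refl
      rw [he] at hm
      exact hself hm
    · rw [hinv]
      exact isClass_comp hswgd
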